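/- The iterated Eichler integral admits the alternative expression Ĩ_a^z(α₁,...,α_n; f₁,...,f_n) = (-1)^{α₁+···+α_n} · (-1)^n Γ(α₁)···Γ(α_n) times the iterated integral from a to z of the word of 1-forms consisting of (α₁-1) copies of dz₁, then f₁ dz, then (α₂-1) copies of dz, then f₂ dz, ..., ending with (α_n-1) copies of dz followed by f_n dz. -/

import Mathlib

open scoped BigOperators


section IterAntiPrelim

/-- iterated antiderivative starting at 0 -/
noncomputable def iterAnti (g : ℝ → ℂ) : ℕ → ℝ → ℂ
  | 0 => g
  | n+1 => fun u => ∫ t in (0:ℝ)..u, iterAnti g n t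

theorem ftc_S {S : Set ℝ} (hS : IsOpen S) (hI : ∀ u ∈ S, ∀ v ∈ S, Set.uIcc u v ⊆ S)
    (h0 : (0:ℝ) ∈ S) {g : ℝ → ℂ} (hg : ContinuousOn g S) :
    ∀ u ∈ S, HasDerivAt (fun u => ∫ t in (0:ℝ)..u, g t) (g u) u := by
  intro u hu
  exact intervalIntegral.integral_hasDerivAt_right
    ((hg.mono (hI 0 h0 u hu)).intervalIntegrable)
    (hg.stronglyMeasurableAtFilter hS u hu) (hg.continuousAt (hS.mem_nhds hu))

theorem cont_iterAnti {S : Set ℝ} (hS : IsOpen S) (hI : ∀ u ∈ S, ∀ v ∈ S, Set.uIcc u v ⊆ S)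
    (h0 : (0:ℝ) ∈ S) {g : ℝ → ℂ} (hg : ContinuousOn g S) :
    ∀ n, ContinuousOn (iterAnti g n) S := by
  intro n
  induction n with
  | zero => exact hg
  | succ n ih =>
    intro u hu
    exact ((ftc_S hS hI h0 ih u hu).continuousAt).continuousWithinAt

theorem iterAnti_comp (g : ℝ → ℂ) : ∀ n u, iterAnti (iterAnti g 1) n u = iterAnti g (n+1) u := by
  intro n
  induction n with
  | zero => intro u; rfl
  | succ n ih =>
    intro u
    show (∫ t in (0:ℝ)..u, iterAnti (iterAnti g 1) n t) = ∫ t in (0:ℝ)..u, iterAnti g (n+1) t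
    exact intervalIntegral.integral_congr fun t _ => ih t

theorem key_lemma {S : Set ℝ} (hS : IsOpen S) (hI : ∀ u ∈ S, ∀ v ∈ S, Set.uIcc u v ⊆ S)
    (h0 : (0:ℝ) ∈ S) :
    ∀ (k : ℕ) (g : ℝ → ℂ), ContinuousOn g S → ∀ u ∈ S,
      (∫ t in (0:ℝ)..u, ((u:ℂ) - (t:ℂ)) ^ k * g t) = (k.factorial : ℂ) * iterAnti g (k+1) u := by
  intro k
  induction k with
  | zero =>
    intro g hg u hu
    simp only [pow_zero, one_mul, Nat.factorial_zero, Nat.cast_one]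
    rfl
  | succ k ih =>
    intro g hg u hu
    have hsub : Set.uIcc (0:ℝ) u ⊆ S := hI 0 h0 u hu
    set G := iterAnti g 1 with hGdef
    have hG : ContinuousOn G S := cont_iterAnti hS hI h0 hg 1
    have hderivu : ∀ x ∈ Set.uIcc (0:ℝ) u,
        HasDerivAt (fun t : ℝ => ((u:ℂ) - (t:ℂ)) ^ (k+1))
          (((k:ℂ)+1) * ((u:ℂ) - (x:ℂ)) ^ k * (-1)) x := by
      intro x _
      have h1 : HasDerivAt (fun w : ℂ => ((u:ℂ) - w) ^ (k+1))
          (((k:ℂ)+1) * ((u:ℂ) - (x:ℂ)) ^ k * (-1)) ((x:ℝ):ℂ) := by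
        have := ((hasDerivAt_id ((x:ℝ):ℂ)).const_sub (u:ℂ)).fun_pow (k+1)
        simpa using this
      exact h1.comp_ofReal
    have hderivG : ∀ x ∈ Set.uIcc (0:ℝ) u, HasDerivAt G (g x) x := fun x hx =>
      ftc_S hS hI h0 hg x (hsub hx)
    have hint1 : IntervalIntegrable (fun x : ℝ => ((k:ℂ)+1) * ((u:ℂ) - (x:ℂ)) ^ k * (-1))
        MeasureTheory.volume 0 u := by
      apply Continuous.intervalIntegrable
      continuity
    have hint2 : IntervalIntegrable g MeasureTheory.volume 0 u :=
      (hg.mono hsub).intervalIntegrable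
    have ibp := intervalIntegral.integral_mul_deriv_eq_deriv_mul hderivu hderivG hint1 hint2
    have hG0 : G 0 = 0 := by simp [hGdef, iterAnti]
    rw [ibp, hG0]
    have : (∫ x in (0:ℝ)..u, ((k:ℂ)+1) * ((u:ℂ) - (x:ℂ)) ^ k * (-1) * G x)
        = -(((k:ℂ)+1) * ∫ x in (0:ℝ)..u, ((u:ℂ) - (x:ℂ)) ^ k * G x) := by
      rw [← intervalIntegral.integral_const_mul, ← intervalIntegral.integral_neg]
      exact intervalIntegral.integral_congr fun x _ => by ring
    rw [this, ih G hG u hu, iterAnti_comp]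
    simp only [sub_self]
    push_cast [Nat.factorial_succ]
    ring

end IterAntiPrelim

/-- Iterated path integral ∫_a^z g₁ dz₁ ∫_a^{z₁} g₂ dz₂ ⋯ of a word of integrands,
along straight-line paths (which stay in ℍ since ℍ is convex). -/
noncomputable def iterIntegral (a : ℂ) : List (ℂ → ℂ) → ℂ → ℂ
  | [], _ => 1
  | g :: gs, z =>
      ∫ t in (0 : ℝ)..1,
        g (a + (t : ℂ) * (z - a)) * iterIntegral a gs (a + (t : ℂ) * (z - a)) * (z - a)

/-- The iterated Eichler integral Ĩ_a^z(α₁,…,α_n; f₁,…,f_n)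
= ∫_a^z f₁(z₁)(z₁-z)^{α₁-1} dz₁ ∫_a^{z₁} f₂(z₂)(z₂-z₁)^{α₂-1} dz₂ ⋯,
along straight-line paths. -/
noncomputable def iterEichler (a : ℂ) : List ((ℂ → ℂ) × ℕ) → ℂ → ℂ
  | [], _ => 1
  | p :: rest, z =>
      ∫ t in (0 : ℝ)..1,
        p.1 (a + (t : ℂ) * (z - a)) * ((a + (t : ℂ) * (z - a)) - z) ^ (p.2 - 1) *
          iterEichler a rest (a + (t : ℂ) * (z - a)) * (z - a)

noncomputable def pt (a z : ℂ) (t : ℝ) : ℂ := a + (t:ℂ) * (z - a)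

def Sset (a z : ℂ) : Set ℝ := {t : ℝ | 0 < (pt a z t).im}

theorem pt_im (a z : ℂ) (t : ℝ) : (pt a z t).im = a.im + t * (z - a).im := by
  simp [pt, Complex.add_im, Complex.mul_im]

theorem isOpen_Sset (a z : ℂ) : IsOpen (Sset a z) := by
  have : Sset a z = {t : ℝ | 0 < a.im + t * (z - a).im} := by
    ext t; simp [Sset, pt_im]
  rw [this]
  exact isOpen_lt continuous_const (by continuity)

theorem uIcc_Sset (a z : ℂ) : ∀ u ∈ Sset a z, ∀ v ∈ Sset a z, Set.uIcc u v ⊆ Sset a z := by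
  intro u hu v hv t ht
  simp only [Sset, Set.mem_setOf_eq, pt_im] at hu hv ⊢
  rcases Set.mem_uIcc.mp ht with ⟨h1, h2⟩ | ⟨h1, h2⟩ <;>
    rcases le_total 0 ((z - a).im) with hm | hm
  · nlinarith [mul_le_mul_of_nonneg_right h1 hm]
  · nlinarith [mul_le_mul_of_nonpos_right h2 hm]
  · nlinarith [mul_le_mul_of_nonneg_right h1 hm]
  · nlinarith [mul_le_mul_of_nonpos_right h2 hm]

theorem zero_mem_Sset {a : ℂ} (z : ℂ) (ha : 0 < a.im) : (0:ℝ) ∈ Sset a z := by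
  simp [Sset, pt_im, ha]

theorem one_mem_Sset {a z : ℂ} (hz : 0 < z.im) : (1:ℝ) ∈ Sset a z := by
  simp only [Sset, Set.mem_setOf_eq, pt_im]
  simpa using hz

theorem pt_one (a z : ℂ) : pt a z 1 = z := by simp [pt]

theorem pt_comp (a z : ℂ) (u s : ℝ) : a + (s:ℂ) * (pt a z u - a) = pt a z (u * s) := by
  simp only [pt]; push_cast; ring

theorem subst_lemma (Φ : ℝ → ℂ) (u : ℝ) :
    (∫ s in (0:ℝ)..1, (u:ℂ) * Φ (u * s)) = ∫ t in (0:ℝ)..u, Φ t := by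
  by_cases hu : u = 0
  · subst hu; simp
  · rw [intervalIntegral.integral_const_mul, intervalIntegral.integral_comp_mul_left Φ hu]
    simp only [mul_zero, mul_one, Complex.real_smul, ← mul_assoc]
    push_cast
    rw [mul_inv_cancel₀ (by exact_mod_cast hu), one_mul]

theorem unfoldE (a z : ℂ) (p : (ℂ → ℂ) × ℕ) (rest : List ((ℂ → ℂ) × ℕ)) (u : ℝ) :
    iterEichler a (p :: rest) (pt a z u)
      = ∫ t in (0:ℝ)..u, p.1 (pt a z t) * (((t:ℂ) - (u:ℂ)) * (z - a)) ^ (p.2 - 1) *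
          iterEichler a rest (pt a z t) * (z - a) := by
  rw [iterEichler,
    ← subst_lemma (fun t => p.1 (pt a z t) * (((t:ℂ) - (u:ℂ)) * (z - a)) ^ (p.2 - 1) *
      iterEichler a rest (pt a z t) * (z - a)) u]
  refine intervalIntegral.integral_congr fun s _ => ?_
  rw [pt_comp]
  have h1 : pt a z u - a = (u:ℂ) * (z - a) := by simp [pt]
  have h2 : pt a z (u*s) - pt a z u = (((u*s:ℝ):ℂ) - (u:ℂ)) * (z - a) := by
    simp only [pt]; push_cast; ring
  rw [h1, h2]
  ring

theorem unfoldI (a z : ℂ) (g : ℂ → ℂ) (gs : List (ℂ → ℂ)) (u : ℝ) :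
    iterIntegral a (g :: gs) (pt a z u)
      = ∫ t in (0:ℝ)..u, g (pt a z t) * iterIntegral a gs (pt a z t) * (z - a) := by
  rw [iterIntegral,
    ← subst_lemma (fun t => g (pt a z t) * iterIntegral a gs (pt a z t) * (z - a)) u]
  refine intervalIntegral.integral_congr fun s _ => ?_
  rw [pt_comp]
  have h1 : pt a z u - a = (u:ℂ) * (z - a) := by simp [pt]
  rw [h1]
  ring

theorem cont_word (a z : ℂ) (ha : 0 < a.im) :
    ∀ (gs : List (ℂ → ℂ)), (∀ g ∈ gs, ContinuousOn g {w : ℂ | 0 < w.im}) →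
      ContinuousOn (fun u => iterIntegral a gs (pt a z u)) (Sset a z) := by
  intro gs
  induction gs with
  | nil =>
    intro _
    have : (fun u : ℝ => iterIntegral a [] (pt a z u)) = fun _ => (1:ℂ) := rfl
    rw [this]; exact continuousOn_const
  | cons g gs ih =>
    intro hgs
    have hptc : Continuous (fun t : ℝ => pt a z t) := by
      unfold pt; continuity
    have hmap : Set.MapsTo (fun t : ℝ => pt a z t) (Sset a z) {w : ℂ | 0 < w.im} :=
      fun t ht => ht
    have hg : ContinuousOn (fun t : ℝ => g (pt a z t)) (Sset a z) :=
      (hgs g List.mem_cons_self).comp hptc.continuousOn hmap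
    have hinner : ContinuousOn
        (fun t : ℝ => g (pt a z t) * iterIntegral a gs (pt a z t) * (z - a)) (Sset a z) :=
      (hg.mul (ih (fun q hq => hgs q (List.mem_cons_of_mem _ hq)))).mul continuousOn_const
    have hcont : ContinuousOn
        (fun u => ∫ t in (0:ℝ)..u, g (pt a z t) * iterIntegral a gs (pt a z t) * (z - a))
        (Sset a z) := fun u hu =>
      ((ftc_S (isOpen_Sset a z) (uIcc_Sset a z) (zero_mem_Sset z ha) hinner u
        hu).continuousAt).continuousWithinAt
    exact hcont.congr fun u _ => unfoldI a z g gs u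

theorem rep_word (a z : ℂ) (ha : 0 < a.im) (f : ℂ → ℂ) (gs : List (ℂ → ℂ)) :
    ∀ (k : ℕ), ∀ u ∈ Sset a z,
      iterIntegral a (List.replicate k (fun _ => (1:ℂ)) ++ (f :: gs)) (pt a z u)
        = (z - a) ^ k *
            iterAnti (fun t => f (pt a z t) * iterIntegral a gs (pt a z t) * (z - a)) (k+1) u := by
  intro k
  induction k with
  | zero =>
    intro u hu
    simp only [List.replicate, List.nil_append, pow_zero, one_mul]
    rw [unfoldI]
    rfl
  | succ k ih =>
    intro u hu
    rw [List.replicate_succ, List.cons_append, unfoldI]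
    have h1 : (∫ t in (0:ℝ)..u, (fun _ => (1:ℂ)) (pt a z t) *
          iterIntegral a (List.replicate k (fun _ => (1:ℂ)) ++ (f :: gs)) (pt a z t) * (z - a))
        = ∫ t in (0:ℝ)..u, (z - a)^(k+1) *
            iterAnti (fun t => f (pt a z t) * iterIntegral a gs (pt a z t) * (z - a)) (k+1) t := by
      refine intervalIntegral.integral_congr fun t ht => ?_
      rw [ih t (uIcc_Sset a z 0 (zero_mem_Sset z ha) u hu ht)]
      ring
    rw [h1, intervalIntegral.integral_const_mul]
    rfl

theorem iterEichler_eq_aux (a : ℂ) (ha : 0 < a.im) :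
    ∀ (L : List ((ℂ → ℂ) × ℕ)),
      (∀ p ∈ L, DifferentiableOn ℂ p.1 {w : ℂ | 0 < w.im}) →
      (∀ p ∈ L, 1 ≤ p.2) →
      ∀ z : ℂ, 0 < z.im →
      iterEichler a L z
        = (-1 : ℂ) ^ ((L.map Prod.snd).sum) * (-1 : ℂ) ^ L.length *
            ((L.map (fun p => (Nat.factorial (p.2 - 1) : ℂ))).prod) *
            iterIntegral a
              (L.flatMap (fun p => List.replicate (p.2 - 1) (fun _ => (1 : ℂ)) ++ [p.1])) z := by
  intro L
  induction L with
  | nil =>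
    intro _ _ z _
    simp [iterEichler, iterIntegral]
  | cons p rest ih =>
    intro hol hα z hz
    obtain ⟨k, hk⟩ : ∃ k, p.2 = k + 1 :=
      ⟨p.2 - 1, (Nat.succ_pred_eq_of_pos (hα p List.mem_cons_self)).symm⟩
    have h0S : (0:ℝ) ∈ Sset a z := zero_mem_Sset z ha
    have h1S : (1:ℝ) ∈ Sset a z := one_mem_Sset hz
    set Cr : ℂ := (-1 : ℂ) ^ ((rest.map Prod.snd).sum) * (-1 : ℂ) ^ rest.length *
        ((rest.map (fun q => (Nat.factorial (q.2 - 1) : ℂ))).prod) with hCr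
    set w : List (ℂ → ℂ) :=
      rest.flatMap (fun q => List.replicate (q.2 - 1) (fun _ => (1 : ℂ)) ++ [q.1]) with hw
    set g : ℝ → ℂ := fun t => p.1 (pt a z t) * iterIntegral a w (pt a z t) * (z - a) with hg
    -- continuity of the word entries
    have hwcont : ∀ q ∈ w, ContinuousOn q {x : ℂ | 0 < x.im} := by
      intro q hq
      rw [hw] at hq
      rcases List.mem_flatMap.mp hq with ⟨r, hr, hq'⟩
      rcases List.mem_append.mp hq' with h' | h'
      · rw [(List.mem_replicate.mp h').2]; exact continuousOn_const
      · rw [List.mem_singleton.mp h']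
        exact (hol r (List.mem_cons_of_mem _ hr)).continuousOn
    have hptc : Continuous (fun t : ℝ => pt a z t) := by unfold pt; continuity
    have hgcont : ContinuousOn g (Sset a z) := by
      rw [hg]
      exact (((hol p List.mem_cons_self).continuousOn.comp hptc.continuousOn
          (fun t ht => ht)).mul (cont_word a z ha w hwcont)).mul continuousOn_const
    -- LHS
    conv_lhs => rw [← pt_one a z]
    rw [unfoldE a z p rest 1]
    have hstep : (∫ t in (0:ℝ)..1, p.1 (pt a z t) * (((t:ℂ) - ((1:ℝ):ℂ)) * (z - a)) ^ (p.2 - 1) *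
          iterEichler a rest (pt a z t) * (z - a))
        = ((-1:ℂ)^k * Cr * (z - a)^k) *
            ∫ t in (0:ℝ)..1, (((1:ℝ):ℂ) - (t:ℂ)) ^ k * g t := by
      rw [← intervalIntegral.integral_const_mul]
      refine intervalIntegral.integral_congr fun t ht => ?_
      have htS : t ∈ Sset a z := uIcc_Sset a z 0 h0S 1 h1S ht
      have hrest := ih (fun q hq => hol q (List.mem_cons_of_mem _ hq))
        (fun q hq => hα q (List.mem_cons_of_mem _ hq)) (pt a z t) htS
      rw [hrest, hk]
      simp only [Nat.add_sub_cancel]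
      have hpow : (((t:ℂ) - ((1:ℝ):ℂ)) * (z - a)) ^ k
          = (-1:ℂ)^k * ((((1:ℝ):ℂ) - (t:ℂ)) ^ k * (z - a)^k) := by
        rw [show ((t:ℂ) - ((1:ℝ):ℂ)) * (z - a)
            = (-1) * ((((1:ℝ):ℂ) - (t:ℂ)) * (z - a)) by push_cast; ring, mul_pow, mul_pow]
      rw [hpow, hg, hCr, hw]
      ring
    rw [hstep, key_lemma (isOpen_Sset a z) (uIcc_Sset a z) h0S k g hgcont 1 h1S]
    -- RHS
    have hword : ((p :: rest).flatMap
          (fun q => List.replicate (q.2 - 1) (fun _ => (1 : ℂ)) ++ [q.1]))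
        = List.replicate k (fun _ => (1:ℂ)) ++ (p.1 :: w) := by
      rw [List.flatMap_cons, hk, hw]
      simp [List.append_assoc]
    rw [hword]
    conv_rhs => rw [← pt_one a z]
    rw [rep_word a z ha p.1 w k 1 h1S, ← hg]
    -- constants
    simp only [List.map_cons, List.sum_cons, List.length_cons, List.prod_cons, hk,
      Nat.add_sub_cancel, ← hCr]
    rw [pow_add, pow_add, pow_succ]
    norm_num
    ring

theorem iterEichler_eq_iterIntegral
    (L : List ((ℂ → ℂ) × ℕ))
    (hol : ∀ p ∈ L, DifferentiableOn ℂ p.1 {w : ℂ | 0 < w.im})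
    (hα : ∀ p ∈ L, 1 ≤ p.2)
    (a z : ℂ) (ha : 0 < a.im) (hz : 0 < z.im) :
    iterEichler a L z
      = (-1 : ℂ) ^ ((L.map Prod.snd).sum) * (-1 : ℂ) ^ L.length *
          ((L.map (fun p => (Nat.factorial (p.2 - 1) : ℂ))).prod) *
          iterIntegral a
            (L.flatMap (fun p => List.replicate (p.2 - 1) (fun _ => (1 : ℂ)) ++ [p.1])) z :=
  iterEichler_eq_aux a ha L hol hα z hz
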